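/- Let P, Q be real polynomials and suppose the function F(λ) = P(λ) + √(1−λ²)·Q(λ) is constant on the interval [0,1). Then P is a constant polynomial and Q is the zero polynomial. -/
import Mathlib


theorem stmt4 (P Q : Polynomial ℝ) (c : ℝ)
    (h : ∀ lam ∈ Set.Ico (0:ℝ) 1,
      P.eval lam + Real.sqrt (1 - lam ^ 2) * Q.eval lam = c) :
    (∃ k : ℝ, P = Polynomial.C k) ∧ Q = 0 := by
  set f : Polynomial ℝ := Polynomial.C c - P with hf
  have key : f ^ 2 = (1 - Polynomial.X ^ 2) * Q ^ 2 := by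
    apply Polynomial.eq_of_infinite_eval_eq
    apply Set.Infinite.mono (s := Set.Ico (0:ℝ) 1)
    · intro lam hlam
      have h1 : (0:ℝ) ≤ 1 - lam ^ 2 := by
        obtain ⟨h0, h1⟩ := hlam
        nlinarith
      have := h lam hlam
      have hsq : Real.sqrt (1 - lam ^ 2) * Q.eval lam = c - P.eval lam := by
        linarith
      have h2 : (Real.sqrt (1 - lam ^ 2)) ^ 2 = 1 - lam ^ 2 :=
        Real.sq_sqrt h1
      simp only [Set.mem_setOf_eq, hf, Polynomial.eval_pow, Polynomial.eval_mul,
        Polynomial.eval_sub, Polynomial.eval_one, Polynomial.eval_C, Polynomial.eval_X]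
      calc (c - P.eval lam) ^ 2
          = (Real.sqrt (1 - lam ^ 2) * Q.eval lam) ^ 2 := by rw [hsq]
        _ = (1 - lam ^ 2) * Q.eval lam ^ 2 := by rw [mul_pow, h2]
    · exact Set.Ico_infinite (by norm_num)
  have hQ : Q = 0 := by
    by_contra hQ0
    have hx : (1 - Polynomial.X ^ 2 : Polynomial ℝ) ≠ 0 := by
      intro hcontra
      have := congrArg (Polynomial.coeff · 2) hcontra
      simp [Polynomial.coeff_one] at this
    have hlead : ((1 - Polynomial.X ^ 2) * Q ^ 2 : Polynomial ℝ).leadingCoeff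
        = (1 - Polynomial.X ^ 2 : Polynomial ℝ).leadingCoeff * Q.leadingCoeff ^ 2 := by
      rw [Polynomial.leadingCoeff_mul, Polynomial.leadingCoeff_pow]
    have hl1 : (1 - Polynomial.X ^ 2 : Polynomial ℝ).leadingCoeff = -1 := by
      have heq : (1 - Polynomial.X ^ 2 : Polynomial ℝ)
          = -(Polynomial.X ^ 2 - Polynomial.C 1) := by
        rw [Polynomial.C_1]; ring
      rw [heq, Polynomial.leadingCoeff_neg,
        Polynomial.leadingCoeff_X_pow_sub_C two_pos]
    have hQl : Q.leadingCoeff ≠ 0 := Polynomial.leadingCoeff_ne_zero.mpr hQ0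
    have hneg : ((1 - Polynomial.X ^ 2) * Q ^ 2 : Polynomial ℝ).leadingCoeff < 0 := by
      rw [hlead, hl1]
      have h2 : 0 < Q.leadingCoeff ^ 2 :=
        lt_of_le_of_ne (sq_nonneg _) (Ne.symm (pow_ne_zero 2 hQl))
      linarith
    have hpos : (0:ℝ) ≤ (f ^ 2).leadingCoeff := by
      rw [Polynomial.leadingCoeff_pow]
      positivity
    rw [key] at hpos
    linarith
  have hf2 : f ^ 2 = 0 := by rw [key, hQ]; ring
  have hf0 : f = 0 := pow_eq_zero_iff (n := 2) (by norm_num) |>.mp hf2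
  have hP : P = Polynomial.C c := by
    have : Polynomial.C c - P = 0 := hf0
    linear_combination -this
  exact ⟨⟨c, hP⟩, hQ⟩
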